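/- Let a, b, c, d be integers with 0 < a < c, 0 < b < d, and a·d − b·c = 1. If (x, y) is a pair of integers satisfying a ≤ x ≤ c, a·y ≥ b·x, and (y − b)·(c − a) ≤ (d − b)·(x − a), then either a·y = b·x or (x, y) = (c, d). (Geometrically: the triangle with vertices (a,b), (c,d) and (c, cb/a) contains no lattice points in its interior, and all its boundary lattice points other than (c,d) lie on the line y = (b/a)x.) -/

import Mathlib

/-- Let `0 < a < c`, `0 < b < d` be integers with `a·d − b·c = 1`. If integers `(x, y)` satisfy
`a ≤ x ≤ c`, `a·y ≥ b·x` and `(y − b)·(c − a) ≤ (d − b)·(x − a)`, then either `a·y = b·x` or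
`(x, y) = (c, d)`. -/
theorem stmt17 (a b c d x y : ℤ)
    (ha : 0 < a) (hac : a < c) (hb : 0 < b) (hbd : b < d)
    (hdet : a * d - b * c = 1)
    (hx1 : a ≤ x) (hx2 : x ≤ c)
    (hy1 : b * x ≤ a * y)
    (hy2 : (y - b) * (c - a) ≤ (d - b) * (x - a)) :
    a * y = b * x ∨ (x = c ∧ y = d) := by
  set u := a * y - b * x with hu
  set v := d * x - c * y with hv
  have hxeq : x = a * v + c * u := by rw [hu, hv]; linear_combination (-x) * hdet
  have hyeq : y = b * v + d * u := by rw [hu, hv]; linear_combination (-y) * hdet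
  have hu0 : 0 ≤ u := by omega
  have huv : 1 ≤ u + v := by nlinarith [hy2, hdet]
  rcases eq_or_lt_of_le hu0 with h0 | h1
  · left; omega
  · right
    have hav : a * v + c * u ≤ c := by omega
    rcases eq_or_lt_of_le (show (0:ℤ) + 1 ≤ u from h1) with h2 | h3
    · -- u = 1
      have hv0 : v = 0 := by nlinarith
      constructor
      · rw [hxeq, hv0, ← h2]; ring
      · rw [hyeq, hv0, ← h2]; ring
    · exfalso
      nlinarith [mul_le_mul_of_nonneg_left (show (1:ℤ) - u ≤ v by omega) ha.le]
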